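/- If an integer tetrahedron has perimeter n and maximum face-perimeter M (the maximum over the four triangular faces of the sum of that face's three side lengths), then ⌈(3M+3)/2⌉ ≤ n ≤ 2M, equivalently ⌈n/2⌉ ≤ M ≤ ⌊(2n−3)/3⌋. -/

import Mathlib

/-- An integer tetrahedron: four affinely independent points in `ℝ³` all of whose
pairwise distances are (positive) integers. -/
def IsIntegerTetrahedron (v : Fin 4 → EuclideanSpace ℝ (Fin 3)) : Prop :=
  AffineIndependent ℝ v ∧ ∀ i j : Fin 4, i ≠ j → ∃ m : ℕ, 0 < m ∧ dist (v i) (v j) = m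

/-- `v` has perimeter `n`: the six edge lengths sum to `n` (ordered pairs count twice). -/
def TetraPerim (v : Fin 4 → EuclideanSpace ℝ (Fin 3)) (n : ℕ) : Prop :=
  ∑ i : Fin 4, ∑ j : Fin 4, dist (v i) (v j) = 2 * (n : ℝ)

/-- The perimeter of the face of `v` opposite the vertex `l` (each edge counted twice
in the ordered double sum, whence the division by `2`). -/
noncomputable def FacePerim (v : Fin 4 → EuclideanSpace ℝ (Fin 3)) (l : Fin 4) : ℝ :=
  (∑ i : Fin 4, ∑ j : Fin 4, if i ≠ l ∧ j ≠ l then dist (v i) (v j) else 0) / 2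

/-- `v` has maximum face-perimeter `M`. -/
def TetraMaxFacePerim (v : Fin 4 → EuclideanSpace ℝ (Fin 3)) (M : ℕ) : Prop :=
  (∃ l : Fin 4, FacePerim v l = (M : ℝ)) ∧ ∀ l : Fin 4, FacePerim v l ≤ (M : ℝ)

theorem perimeter_maxFacePerimeter_bounds (v : Fin 4 → EuclideanSpace ℝ (Fin 3))
    (n M : ℕ) (hv : IsIntegerTetrahedron v) (hn : TetraPerim v n)
    (hM : TetraMaxFacePerim v M) :
    ((3 * M + 4) / 2 ≤ n ∧ n ≤ 2 * M) ∧ ((n + 1) / 2 ≤ M ∧ M ≤ (2 * n - 3) / 3) := by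
  obtain ⟨hA, hpos⟩ := hv
  have hE : ∀ i j : Fin 4, ∃ m : ℕ, dist (v i) (v j) = m := by
    intro i j
    by_cases h : i = j
    · exact ⟨0, by simp [h]⟩
    · obtain ⟨m, _, hm⟩ := hpos i j h; exact ⟨m, hm⟩
  choose d hd using hE
  have hdsymm : ∀ i j, d i j = d j i := by
    intro i j
    have : (d i j : ℝ) = d j i := by rw [← hd, ← hd, dist_comm]
    exact_mod_cast this
  have hdiag : ∀ i, d i i = 0 := by
    intro i
    have : (d i i : ℝ) = 0 := by rw [← hd]; simp
    exact_mod_cast this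
  have tri : ∀ i j k : Fin 4, i ≠ j → j ≠ k → i ≠ k → d i k + 1 ≤ d i j + d j k := by
    intro i j k hij hjk hik
    have hlt : dist (v i) (v k) < dist (v i) (v j) + dist (v j) (v k) := by
      rcases (dist_triangle (v i) (v j) (v k)).lt_or_eq with h | h
      · exact h
      · exfalso
        have hw : Wbtw ℝ (v i) (v j) (v k) := dist_add_dist_eq_iff.mp h.symm
        have hcol := hw.collinear
        have hinj : Function.Injective ![i, j, k] := by
          intro a b hab
          fin_cases a <;> fin_cases b <;> simp_all
        have h3 : AffineIndependent ℝ (v ∘ (⟨![i,j,k], hinj⟩ : Fin 3 ↪ Fin 4)) :=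
          hA.comp_embedding _
        have heq : v ∘ (⟨![i,j,k], hinj⟩ : Fin 3 ↪ Fin 4) = ![v i, v j, v k] := by
          funext a; fin_cases a <;> rfl
        rw [heq, affineIndependent_iff_not_collinear_set] at h3
        exact h3 hcol
    rw [hd, hd, hd] at hlt
    have h2 : d i k < d i j + d j k := by exact_mod_cast hlt
    omega
  have hS : ∑ i : Fin 4, ∑ j : Fin 4, d i j = 2 * n := by
    have hc : ((∑ i : Fin 4, ∑ j : Fin 4, d i j : ℕ) : ℝ) = 2 * n := by
      push_cast
      rw [← hn]
      exact Finset.sum_congr rfl fun i _ => Finset.sum_congr rfl fun j _ => (hd i j).symm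
    exact_mod_cast hc
  have hFP : ∀ l : Fin 4, FacePerim v l =
      ((∑ i : Fin 4, ∑ j : Fin 4, if i ≠ l ∧ j ≠ l then d i j else 0 : ℕ) : ℝ) / 2 := by
    intro l
    unfold FacePerim
    congr 1
    push_cast
    refine Finset.sum_congr rfl fun i _ => Finset.sum_congr rfl fun j _ => ?_
    split <;> simp [hd]
  obtain ⟨⟨l, hl⟩, hub⟩ := hM
  rw [hFP] at hl
  have hl' : (∑ i : Fin 4, ∑ j : Fin 4, if i ≠ l ∧ j ≠ l then d i j else 0) = 2 * M := by
    have : ((∑ i : Fin 4, ∑ j : Fin 4, if i ≠ l ∧ j ≠ l then d i j else 0 : ℕ) : ℝ)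
        = 2 * M := by
      field_simp at hl; push_cast at hl ⊢; linarith
    exact_mod_cast this
  have hub' : ∀ l : Fin 4,
      (∑ i : Fin 4, ∑ j : Fin 4, if i ≠ l ∧ j ≠ l then d i j else 0) ≤ 2 * M := by
    intro l'
    have h := hub l'
    rw [hFP] at h
    have : ((∑ i : Fin 4, ∑ j : Fin 4, if i ≠ l' ∧ j ≠ l' then d i j else 0 : ℕ) : ℝ)
        ≤ 2 * M := by linarith [h]
    exact_mod_cast this
  clear hl hub hFP hn hd hpos
  have hu0 := hub' 0
  have hu1 := hub' 1
  have hu2 := hub' 2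
  have hu3 := hub' 3
  have t1 := tri 1 0 2 (by decide) (by decide) (by decide)
  have t2 := tri 1 0 3 (by decide) (by decide) (by decide)
  have t3 := tri 2 0 3 (by decide) (by decide) (by decide)
  have t4 := tri 0 1 2 (by decide) (by decide) (by decide)
  have t5 := tri 0 1 3 (by decide) (by decide) (by decide)
  have t6 := tri 2 1 3 (by decide) (by decide) (by decide)
  have t7 := tri 0 2 1 (by decide) (by decide) (by decide)
  have t8 := tri 0 2 3 (by decide) (by decide) (by decide)
  have t9 := tri 1 2 3 (by decide) (by decide) (by decide)
  have t10 := tri 0 3 1 (by decide) (by decide) (by decide)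
  have t11 := tri 0 3 2 (by decide) (by decide) (by decide)
  have t12 := tri 1 3 2 (by decide) (by decide) (by decide)
  have s01 := hdsymm 0 1
  have s02 := hdsymm 0 2
  have s03 := hdsymm 0 3
  have s12 := hdsymm 1 2
  have s13 := hdsymm 1 3
  have s23 := hdsymm 2 3
  simp (config := { decide := true }) [Fin.sum_univ_four, hdiag] at hS hu0 hu1 hu2 hu3
  fin_cases l <;>
    (simp (config := { decide := true }) [Fin.sum_univ_four, hdiag] at hl'; omega)
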